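/- Reflection identity for the top-count function: let v be an anonymous voting rule on m ≥ 3 candidates that is pairwise responsive, pairwise isolated, and satisfies ε-strong unanimity, and let v'(x,j) be the selection probability of x on the canonical profile with exactly j voters ranking x first. Then for every candidate x and every q ∈ {0,...,n}, |v'(x, n−q) − (1 − v'(x, q))| ≤ O(mε) (with an explicit constant, e.g. ≤ 66mε). -/

import Mathlib

open Finset

variable {C : Type*}

/-- A preference ordering on `C`: a ranking of the candidates, where a higher
rank means more preferred. -/
abbrev Pref (C : Type*) [Fintype C] := C ≃ Fin (Fintype.card C)

/-- `x` is strictly preferred to `y` in `P`. -/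
def PrefOver [Fintype C] (P : Pref C) (x y : C) : Prop := P y < P x

/-- The top (most preferred) candidate of `P`. -/
def topC [Fintype C] [Nonempty C] (P : Pref C) : C :=
  P.symm ⟨Fintype.card C - 1, Nat.sub_lt Fintype.card_pos Nat.one_pos⟩

/-- `x` is directly above `y` in `P`. -/
def DirAbove [Fintype C] (P : Pref C) (x y : C) : Prop := (P x : ℕ) = (P y : ℕ) + 1

/-- The ordering `P` with candidates `x` and `y` swapped. -/
def swapIn [Fintype C] [DecidableEq C] (P : Pref C) (x y : C) : Pref C :=
  (Equiv.swap x y).trans P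

/-- A (randomized) voting rule: nonnegative selection probabilities summing to 1. -/
def IsVotingRule [Fintype C] {n : ℕ} (v : (Fin n → Pref C) → C → ℝ) : Prop :=
  (∀ Pvec x, 0 ≤ v Pvec x) ∧ (∀ Pvec, ∑ x, v Pvec x = 1)

def Anonymous [Fintype C] {n : ℕ} (v : (Fin n → Pref C) → C → ℝ) : Prop :=
  ∀ (σ : Equiv.Perm (Fin n)) (Pvec : Fin n → Pref C) (x : C), v (Pvec ∘ σ) x = v Pvec x

/-- Expected utility of a distribution `d` over candidates under utility `u`. -/
def EU [Fintype C] (u : C → ℝ) (d : C → ℝ) : ℝ := ∑ x, u x * d x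

/-- A `[0,1]`-valued utility function consistent with the ordering `P`. -/
def Consistent [Fintype C] (u : C → ℝ) (P : Pref C) : Prop :=
  (∀ x, u x ∈ Set.Icc (0 : ℝ) 1) ∧ ∀ x y, u x > u y ↔ PrefOver P x y

/-- The random dictatorship voting rule. -/
noncomputable def vdict [Fintype C] [Nonempty C] [DecidableEq C] {n : ℕ}
    (Pvec : Fin n → Pref C) (x : C) : ℝ :=
  ((Finset.univ.filter (fun i => topC (Pvec i) = x)).card : ℝ) / n

def StrategyProofRule [Fintype C] {n : ℕ} (v : (Fin n → Pref C) → C → ℝ) : Prop :=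
  ∀ (i : Fin n) (Pvec : Fin n → Pref C) (P' : Pref C) (u : C → ℝ),
    Consistent u (Pvec i) → EU u (v (Function.update Pvec i P')) ≤ EU u (v Pvec)

def IsBelief [Fintype C] [DecidableEq C] (φ : Pref C → ℝ) : Prop :=
  (∀ P, 0 ≤ φ P) ∧ ∑ P, φ P = 1

/-- The profile where voter `i` submits `Pi` and the other voters submit `Q`. -/
def profileWith [Fintype C] {n : ℕ} (i : Fin n) (Q : {j : Fin n // j ≠ i} → Pref C)
    (Pi : Pref C) : Fin n → Pref C :=
  fun j => if h : j = i then Pi else Q ⟨j, h⟩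

/-- Expected utility for voter `i` reporting `Pi` when the others' orderings are
i.i.d. with distribution `φ`. -/
noncomputable def beliefEU [Fintype C] [DecidableEq C] {n : ℕ}
    (v : (Fin n → Pref C) → C → ℝ) (i : Fin n) (φ : Pref C → ℝ) (u : C → ℝ)
    (Pi : Pref C) : ℝ :=
  ∑ Q : {j : Fin n // j ≠ i} → Pref C, (∏ j, φ (Q j)) * EU u (v (profileWith i Q Pi))

/-- Strategy-proofness with respect to a single i.i.d. belief `φ`. -/
def SPwrtBelief [Fintype C] [DecidableEq C] {n : ℕ}
    (v : (Fin n → Pref C) → C → ℝ) (φ : Pref C → ℝ) : Prop :=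
  ∀ (i : Fin n) (Pi Pi' : Pref C) (u : C → ℝ),
    Consistent u Pi → beliefEU v i φ u Pi' ≤ beliefEU v i φ u Pi

/-- Weak strategy-proofness: strategy-proofness w.r.t. all i.i.d. beliefs. -/
def WeaklySP [Fintype C] [DecidableEq C] {n : ℕ}
    (v : (Fin n → Pref C) → C → ℝ) : Prop :=
  ∀ φ : Pref C → ℝ, IsBelief φ → SPwrtBelief v φ

def ParetoEff [Fintype C] {n : ℕ} (ε : ℝ) (v : (Fin n → Pref C) → C → ℝ) : Prop :=
  ∀ (x y : C) (Pvec : Fin n → Pref C), (∀ i, PrefOver (Pvec i) x y) → v Pvec y ≤ ε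

def StrongUnanimity [Fintype C] [Nonempty C] {n : ℕ} (ε : ℝ)
    (v : (Fin n → Pref C) → C → ℝ) : Prop :=
  ∀ (x : C) (Pvec : Fin n → Pref C), (∀ i, topC (Pvec i) = x) → 1 - ε ≤ v Pvec x

def WeakUnanimity [Fintype C] [Nonempty C] {n : ℕ} (ε : ℝ)
    (v : (Fin n → Pref C) → C → ℝ) : Prop :=
  ∀ P : Pref C, 1 - ε ≤ v (fun _ => P) (topC P)

def SuperWeakUnanimity [Fintype C] [Nonempty C] {n : ℕ} (ε : ℝ)
    (v : (Fin n → Pref C) → C → ℝ) : Prop :=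
  ∀ x : C, ∃ Pvec : Fin n → Pref C, (∀ i, topC (Pvec i) = x) ∧ 1 - ε ≤ v Pvec x

def PairwiseResponsive [Fintype C] [DecidableEq C] {n : ℕ}
    (v : (Fin n → Pref C) → C → ℝ) : Prop :=
  ∀ (Pvec : Fin n → Pref C) (i : Fin n) (x y z : C),
    DirAbove (Pvec i) x y → z ≠ x → z ≠ y →
      v (Function.update Pvec i (swapIn (Pvec i) x y)) z = v Pvec z

def PairwiseIsolated [Fintype C] [DecidableEq C] {n : ℕ}
    (v : (Fin n → Pref C) → C → ℝ) : Prop :=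
  ∀ (i : Fin n) (Pvec Pvec' : Fin n → Pref C) (x y : C),
    DirAbove (Pvec i) x y → Pvec' i = Pvec i →
    (∀ j, j ≠ i → (PrefOver (Pvec j) x y ↔ PrefOver (Pvec' j) x y)) →
    v (Function.update Pvec' i (swapIn (Pvec' i) x y)) y - v Pvec' y =
      v (Function.update Pvec i (swapIn (Pvec i) x y)) y - v Pvec y

/-- The ordering `e` with candidate `x` moved to the top (relative order of the
other candidates preserved). -/
def moveToTop [Fintype C] [DecidableEq C] (e : Pref C) (x : C) : Pref C :=
  e.trans ((Fin.revPerm.trans (Fin.cycleRange (e x).rev)).trans Fin.revPerm)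

/-- The ordering `e` with candidate `x` moved to the bottom (relative order of
the other candidates preserved). -/
def moveToBot [Fintype C] [DecidableEq C] (e : Pref C) (x : C) : Pref C :=
  e.trans (Fin.cycleRange (e x))

/-- The canonical profile `P⃗^{x,j}`: the first `j` voters rank `x` on top and
the remaining voters rank `x` on the bottom, with the other candidates ordered
according to the fixed ordering `e`. -/
def canonProfile [Fintype C] [DecidableEq C] {n : ℕ} (e : Pref C) (x : C) (j : ℕ) :
    Fin n → Pref C :=
  fun i => if (i : ℕ) < j then moveToTop e x else moveToBot e x

/-- `v'(x,j)`: the selection probability of `x` on the canonical profile with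
exactly `j` voters ranking `x` first. -/
def vTopCount [Fintype C] [DecidableEq C] {n : ℕ} (v : (Fin n → Pref C) → C → ℝ)
    (e : Pref C) (x : C) (j : ℕ) : ℝ :=
  v (canonProfile e x j) x

set_option linter.unusedSectionVars false
namespace TopCountReflection

variable {C : Type*} [Fintype C] [DecidableEq C]

/-- value of `Fin.cycleRange` in `ℕ` terms, for general `Fin m`. -/
lemma cycleRange_val {m : ℕ} (i j : Fin m) :
    (Fin.cycleRange i j : ℕ) = if (j : ℕ) < (i : ℕ) then (j : ℕ) + 1
      else if (j : ℕ) = (i : ℕ) then 0 else (j : ℕ) := by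
  cases m with
  | zero => exact j.elim0
  | succ m' =>
    by_cases h1 : j < i
    · rw [Fin.cycleRange_of_lt h1, if_pos (by exact h1)]
      exact Fin.val_add_one_of_lt (lt_of_lt_of_le h1 (Fin.le_last i))
    · rw [if_neg (show ¬ ((j:ℕ) < (i:ℕ)) from fun h => h1 h)]
      by_cases h2 : j = i
      · rw [Fin.cycleRange_of_eq h2, if_pos (by rw [h2])]; rfl
      · rw [Fin.cycleRange_of_gt (lt_of_le_of_ne (not_lt.1 h1) (Ne.symm h2)),
          if_neg (show ¬ ((j:ℕ) = (i:ℕ)) from fun h => h2 (Fin.ext h))]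

lemma swapIn_eq_trans (P : Pref C) (a b : C) :
    swapIn P a b = P.trans (Equiv.swap (P a) (P b)) := by
  ext c
  simp only [swapIn, Equiv.trans_apply]
  rcases eq_or_ne c a with rfl | hca
  · simp [Equiv.swap_apply_left]
  rcases eq_or_ne c b with rfl | hcb
  · simp [Equiv.swap_apply_right]
  · rw [Equiv.swap_apply_of_ne_of_ne hca hcb,
      Equiv.swap_apply_of_ne_of_ne (fun h => hca (P.injective h))
        (fun h => hcb (P.injective h))]

lemma swapIn_symm (P : Pref C) (r s : Fin (Fintype.card C)) :
    swapIn P (P.symm r) (P.symm s) = P.trans (Equiv.swap r s) := by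
  rw [swapIn_eq_trans, P.apply_symm_apply, P.apply_symm_apply]

lemma topC_eq [Nonempty C] {P : Pref C} {c : C}
    (h : (P c : ℕ) = Fintype.card C - 1) : topC P = c := by
  have : P c = ⟨Fintype.card C - 1, Nat.sub_lt Fintype.card_pos Nat.one_pos⟩ :=
    Fin.ext h
  rw [topC, ← this, Equiv.symm_apply_apply]

section rules

variable {n : ℕ} {v : (Fin n → Pref C) → C → ℝ}

lemma prob_le_one (hv : IsVotingRule v) (Pvec : Fin n → Pref C) (c : C) :
    v Pvec c ≤ 1 := by
  have h := hv.2 Pvec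
  calc v Pvec c ≤ ∑ x, v Pvec x :=
        Finset.single_le_sum (fun x _ => hv.1 Pvec x) (Finset.mem_univ c)
    _ = 1 := h

lemma prob_pair_le_one (hv : IsVotingRule v) (Pvec : Fin n → Pref C) {c d : C}
    (hcd : c ≠ d) : v Pvec c + v Pvec d ≤ 1 := by
  have h := hv.2 Pvec
  have : ∑ x ∈ ({c, d} : Finset C), v Pvec x ≤ ∑ x, v Pvec x :=
    Finset.sum_le_sum_of_subset_of_nonneg (Finset.subset_univ _)
      (fun x _ _ => hv.1 Pvec x)
  rwa [Finset.sum_pair hcd, h] at this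

/-- If two distributions agree off `{a,b}` and both sum to 1 then the pair sums agree. -/
lemma pair_sum_eq (hv : IsVotingRule v) (Pvec Qvec : Fin n → Pref C) {a b : C}
    (hab : a ≠ b) (h : ∀ c, c ≠ a → c ≠ b → v Pvec c = v Qvec c) :
    v Pvec a + v Pvec b = v Qvec a + v Qvec b := by
  have h1 := hv.2 Pvec
  have h2 := hv.2 Qvec
  have hsplit : ∀ (W : Fin n → Pref C),
      ∑ x, v W x = v W a + (v W b + ∑ x ∈ (Finset.univ.erase a).erase b, v W x) := by
    intro W
    rw [← Finset.add_sum_erase _ _ (Finset.mem_univ a),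
      ← Finset.add_sum_erase _ _ (Finset.mem_erase.2 ⟨hab.symm, Finset.mem_univ b⟩)]
  have hrest : ∑ x ∈ (Finset.univ.erase a).erase b, v Pvec x
      = ∑ x ∈ (Finset.univ.erase a).erase b, v Qvec x := by
    refine Finset.sum_congr rfl (fun c hc => ?_)
    simp only [Finset.mem_erase] at hc
    exact h c hc.2.1 hc.1
  have := hsplit Pvec
  have := hsplit Qvec
  linarith [hsplit Pvec, hsplit Qvec, h1, h2, hrest]

end rules

end TopCountReflection
namespace TopCountReflection

variable {C : Type*} [Fintype C] [DecidableEq C]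

section rules2

variable {n : ℕ} {v : (Fin n → Pref C) → C → ℝ} {ε : ℝ}

/-- Swapping the candidates at ranks `r1 < r2 = r1+1` of voter `i` does not change
the probability of any other candidate. -/
lemma step_untouched (hpr : PairwiseResponsive v) (Pvec : Fin n → Pref C) (i : Fin n)
    (r1 r2 : Fin (Fintype.card C)) (h12 : (r2 : ℕ) = (r1 : ℕ) + 1) (c : C)
    (h1 : c ≠ (Pvec i).symm r1) (h2 : c ≠ (Pvec i).symm r2) :
    v (Function.update Pvec i ((Pvec i).trans (Equiv.swap r2 r1))) c = v Pvec c := by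
  have hDA : DirAbove (Pvec i) ((Pvec i).symm r2) ((Pvec i).symm r1) := by
    unfold DirAbove
    rw [Equiv.apply_symm_apply, Equiv.apply_symm_apply]
    exact h12
  have := hpr Pvec i ((Pvec i).symm r2) ((Pvec i).symm r1) c hDA h2 h1
  rwa [swapIn_symm] at this

lemma pareto [Nonempty C] (hv : IsVotingRule v) (hpr : PairwiseResponsive v)
    (hsu : StrongUnanimity ε v) (d w : C) (hdw : w ≠ d) :
    ∀ (k : ℕ) (Pvec : Fin n → Pref C),
      (∑ i, (Fintype.card C - 1 - ((Pvec i) d : ℕ))) ≤ k →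
      (∀ i, PrefOver (Pvec i) d w) → v Pvec w ≤ ε := by
  intro k
  induction k with
  | zero =>
    intro Pvec hN hdom
    have htop : ∀ i, topC (Pvec i) = d := by
      intro i
      apply topC_eq
      have h1 : Fintype.card C - 1 - ((Pvec i) d : ℕ) = 0 := by
        have := Finset.sum_eq_zero_iff.1 (Nat.le_zero.1 hN) i (Finset.mem_univ i)
        exact this
      have h2 : ((Pvec i) d : ℕ) < Fintype.card C := ((Pvec i) d).2
      omega
    have hu := hsu d Pvec htop
    have hp := prob_pair_le_one hv Pvec hdw
    linarith
  | succ k ih =>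
    intro Pvec hN hdom
    by_cases hall : ∀ i, Fintype.card C - 1 - ((Pvec i) d : ℕ) = 0
    · have htop : ∀ i, topC (Pvec i) = d := by
        intro i
        apply topC_eq
        have h2 : ((Pvec i) d : ℕ) < Fintype.card C := ((Pvec i) d).2
        have := hall i
        omega
      have hu := hsu d Pvec htop
      have hp := prob_pair_le_one hv Pvec hdw
      linarith
    · push_neg at hall
      obtain ⟨i, hi⟩ := hall
      set P := Pvec i with hPdef
      have hrlt : ((P) d : ℕ) + 1 < Fintype.card C := by
        have h2 : ((P) d : ℕ) < Fintype.card C := (P d).2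
        omega
      set r1 : Fin (Fintype.card C) := P d with hr1
      set r2 : Fin (Fintype.card C) := ⟨(r1 : ℕ) + 1, hrlt⟩ with hr2
      have h12 : (r2 : ℕ) = (r1 : ℕ) + 1 := rfl
      set Q : Pref C := P.trans (Equiv.swap r2 r1) with hQ
      set Pvec' := Function.update Pvec i Q with hPvec'
      have hwr1 : w ≠ P.symm r1 := by
        rw [hr1, Equiv.symm_apply_apply]; exact hdw
      have hwr2 : w ≠ P.symm r2 := by
        intro hcon
        have : P w = r2 := by rw [hcon, Equiv.apply_symm_apply]
        have hlt := hdom i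
        unfold PrefOver at hlt
        rw [← hPdef] at hlt
        rw [this] at hlt
        have h5 : (r2 : ℕ) < ((P d : ℕ)) := hlt
        rw [← hr1] at h5
        omega
      have hw_eq : v Pvec' w = v Pvec w :=
        step_untouched hpr Pvec i r1 r2 h12 w hwr1 hwr2
      rw [← hw_eq]
      have hQd : ((Q d : ℕ)) = (r1 : ℕ) + 1 := by
        rw [hQ]
        simp only [Equiv.trans_apply, ← hr1, Equiv.swap_apply_right]
        exact h12
      have hQw : Q w = P w := by
        rw [hQ]
        simp only [Equiv.trans_apply]
        apply Equiv.swap_apply_of_ne_of_ne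
        · intro hcon; exact hwr2 (by rw [← hcon, Equiv.symm_apply_apply])
        · intro hcon; exact hwr1 (by rw [← hcon, Equiv.symm_apply_apply])
      apply ih Pvec'
      · have hsplit1 : ∑ j, (Fintype.card C - 1 - ((Pvec' j) d : ℕ))
            = (Fintype.card C - 1 - ((Q) d : ℕ))
              + ∑ j ∈ Finset.univ.erase i, (Fintype.card C - 1 - ((Pvec j) d : ℕ)) := by
          rw [← Finset.add_sum_erase _ _ (Finset.mem_univ i)]
          congr 1
          · rw [hPvec', Function.update_self]
          · refine Finset.sum_congr rfl fun j hj => ?_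
            rw [hPvec', Function.update_of_ne (Finset.mem_erase.1 hj).1]
        have hsplit2 : ∑ j, (Fintype.card C - 1 - ((Pvec j) d : ℕ))
            = (Fintype.card C - 1 - ((P) d : ℕ))
              + ∑ j ∈ Finset.univ.erase i, (Fintype.card C - 1 - ((Pvec j) d : ℕ)) := by
          rw [← Finset.add_sum_erase _ _ (Finset.mem_univ i)]
        rw [hsplit1]
        rw [hsplit2] at hN
        have hPd : ((P d : ℕ)) < Fintype.card C := (P d).2
        omega
      · intro j
        rcases eq_or_ne j i with rfl | hne
        · rw [hPvec', Function.update_self]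
          unfold PrefOver
          rw [hQw]
          have hlt := hdom j
          unfold PrefOver at hlt
          rw [← hPdef] at hlt
          have : ((P w : ℕ)) < (r1 : ℕ) := hlt
          have hq : ((Q d : ℕ)) = (r1 : ℕ) + 1 := hQd
          exact Fin.lt_def.2 (by rw [hq] at *; omega)
        · rw [hPvec', Function.update_of_ne hne]
          exact hdom j

/-- Combination of anonymity and pairwise isolation. -/
lemma iso_anon (han : Anonymous v) (hpi : PairwiseIsolated v)
    {a b : C} {P : Pref C} (hab : DirAbove P a b)
    (Pvec Pvec' : Fin n → Pref C) (i i' : Fin n)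
    (hP : Pvec i = P) (hP' : Pvec' i' = P) (σ : Equiv.Perm (Fin n)) (hσ : σ i' = i)
    (hpat : ∀ j, j ≠ i' → (PrefOver (Pvec (σ j)) a b ↔ PrefOver (Pvec' j) a b)) :
    v (Function.update Pvec' i' (swapIn P a b)) b - v Pvec' b
      = v (Function.update Pvec i (swapIn P a b)) b - v Pvec b := by
  have hcomp : (Function.update Pvec i (swapIn P a b)) ∘ σ
      = Function.update (Pvec ∘ σ) i' (swapIn P a b) := by
    funext j
    simp only [Function.comp_apply, Function.update_apply]
    by_cases hj : j = i'
    · subst hj; rw [hσ]; simp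
    · rw [if_neg hj, if_neg (fun h => hj (σ.injective (by rw [h, hσ])))]
  have h1 : v Pvec b = v (Pvec ∘ σ) b := (han σ Pvec b).symm
  have h2 : v (Function.update Pvec i (swapIn P a b)) b
      = v (Function.update (Pvec ∘ σ) i' (swapIn P a b)) b := by
    rw [← hcomp]; exact (han σ _ b).symm
  have h3 := hpi i' (Pvec ∘ σ) Pvec' a b
    (by rw [Function.comp_apply, hσ, hP]; exact hab)
    (by rw [hP', Function.comp_apply, hσ, hP])
    (fun j hj => hpat j hj)
  rw [hP'] at h3
  have h4 : (Pvec ∘ σ) i' = P := by rw [Function.comp_apply, hσ, hP]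
  rw [h4] at h3
  rw [h1, h2, h3]

end rules2

end TopCountReflection
namespace TopCountReflection

variable {C : Type*} [Fintype C] [DecidableEq C]

/-- The canonical one-parameter family of profiles: the first `k` voters use `R`,
the rest use `S`. -/
def fam {n : ℕ} (R S : Pref C) (k : ℕ) : Fin n → Pref C :=
  fun i => if (i : ℕ) < k then R else S

@[simp] lemma fam_apply {n : ℕ} (R S : Pref C) (k : ℕ) (j : Fin n) :
    fam R S k j = if (j : ℕ) < k then R else S := rfl

lemma fam_update {n : ℕ} (R S : Pref C) (k : ℕ) (hk : k < n) :
    Function.update (fam R S k) (⟨k, hk⟩ : Fin n) R = fam R S (k + 1) := by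
  funext j
  simp only [Function.update_apply, fam_apply]
  by_cases hj : j = (⟨k, hk⟩ : Fin n)
  · have hv : (j : ℕ) = k := by rw [hj]
    rw [if_pos hj, if_pos (by omega)]
  · have hv : (j : ℕ) ≠ k := fun h => hj (Fin.ext h)
    rw [if_neg hj]
    by_cases h2 : (j : ℕ) < k
    · rw [if_pos h2, if_pos (by omega)]
    · rw [if_neg h2, if_neg (by omega)]

section kernel

variable {n : ℕ} {v : (Fin n → Pref C) → C → ℝ}

lemma kernel (han : Anonymous v) (hpi : PairwiseIsolated v)
    (a b : C) (Pd Qd : Pref C) (hPab : DirAbove Pd a b) (hQab : DirAbove Qd a b)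
    (q : ℕ) (hq : q ≤ n) :
    (v (fam (n := n) (swapIn Pd a b) Pd q) b - v (fam (swapIn Pd a b) Pd 0) b)
      - (v (fam (swapIn Pd a b) Pd n) b - v (fam (swapIn Pd a b) Pd (n - q)) b)
    = (v (fam (n := n) (swapIn Qd a b) Qd q) b - v (fam (swapIn Qd a b) Qd 0) b)
      - (v (fam (swapIn Qd a b) Qd n) b - v (fam (swapIn Qd a b) Qd (n - q)) b) := by
  have hab : a ≠ b := by
    intro h
    unfold DirAbove at hPab
    rw [h] at hPab
    omega
  set Pu := swapIn Pd a b with hPu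
  set Qu := swapIn Qd a b with hQu
  -- preference facts
  have hPdT : PrefOver Pd a b := by
    unfold DirAbove at hPab; unfold PrefOver; exact Fin.lt_def.2 (by omega)
  have hQdT : PrefOver Qd a b := by
    unfold DirAbove at hQab; unfold PrefOver; exact Fin.lt_def.2 (by omega)
  have hPuF : ¬ PrefOver Pu a b := by
    unfold PrefOver
    rw [hPu, swapIn, Equiv.trans_apply, Equiv.trans_apply,
      Equiv.swap_apply_left, Equiv.swap_apply_right]
    unfold DirAbove at hPab
    exact not_lt.2 (Fin.le_def.2 (by omega))
  have hQuF : ¬ PrefOver Qu a b := by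
    unfold PrefOver
    rw [hQu, swapIn, Equiv.trans_apply, Equiv.trans_apply,
      Equiv.swap_apply_left, Equiv.swap_apply_right]
    unfold DirAbove at hQab
    exact not_lt.2 (Fin.le_def.2 (by omega))
  -- step quantities
  set g : ℕ → ℝ := fun k => v (fam Pu Pd (k+1)) b - v (fam Pu Pd k) b with hg
  set g' : ℕ → ℝ := fun k => v (fam Qu Qd (k+1)) b - v (fam Qu Qd k) b with hg'
  -- squares
  have hsquare : ∀ k : ℕ, k + 2 ≤ n → g (k+1) - g' (k+1) = g k - g' k := by
    intro k hk
    have hkn : k < n := by omega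
    have hk1n : k + 1 < n := by omega
    have hNn : n - 1 < n := by omega
    set ik : Fin n := ⟨k, hkn⟩ with hik
    set ik1 : Fin n := ⟨k+1, hk1n⟩ with hik1
    set iN : Fin n := ⟨n-1, hNn⟩ with hiN
    have hikN : ik ≠ iN := fun h => by
      have := congrArg Fin.val h; simp only [hik, hiN] at this; omega
    have hik1ik : ik1 ≠ ik := fun h => by
      have := congrArg Fin.val h; simp only [hik, hik1] at this; omega
    set P1 : Fin n → Pref C := Function.update (fam Pu Pd k) iN Qd with hP1
    set P2 : Fin n → Pref C := Function.update (fam Pu Pd (k+1)) iN Qd with hP2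
    set P3 : Fin n → Pref C := Function.update (fam Pu Pd k) iN Qu with hP3
    set P4 : Fin n → Pref C := Function.update (fam Pu Pd (k+1)) iN Qu with hP4
    -- (s1)
    have hs1 : v P2 b - v P1 b = g k := by
      have h := iso_anon han hpi hPab (fam Pu Pd k) P1 ik ik
        (by simp [hik]) (by rw [hP1, Function.update_of_ne hikN]; simp [hik])
        (Equiv.refl _) rfl ?_
      · have hupd1 : Function.update P1 ik Pu = P2 := by
          rw [hP1, hP2, Function.update_comm hikN.symm, hik, fam_update]
        have hupd2 : Function.update (fam Pu Pd k) ik Pu = fam Pu Pd (k+1) := by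
          rw [hik, fam_update]
        rw [← hPu] at h
        rw [hupd1, hupd2] at h
        rw [hg]
        simp only []
        linarith [h]
      · intro j hj
        simp only [Equiv.refl_apply]
        by_cases hjN : j = iN
        · subst hjN
          rw [hP1, Function.update_self]
          rw [fam_apply, if_neg (by simp only [hiN]; omega)]
          exact iff_of_true hPdT hQdT
        · rw [hP1, Function.update_of_ne hjN]
    -- (s2)
    have hs2 : v P4 b - v P3 b = g (k+1) := by
      set σ : Equiv.Perm (Fin n) := (Equiv.swap ik iN).trans (Equiv.swap ik1 iN) with hσdef
      have hσik : σ ik = ik1 := by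
        rw [hσdef, Equiv.trans_apply, Equiv.swap_apply_left, Equiv.swap_apply_right]
      have h := iso_anon han hpi hPab (fam Pu Pd (k+1)) P3 ik1 ik
        (by simp [hik1]) (by rw [hP3, Function.update_of_ne hikN]; simp [hik])
        σ hσik ?_
      · have hupd1 : Function.update P3 ik Pu = P4 := by
          rw [hP3, hP4, Function.update_comm hikN.symm, hik, fam_update]
        have hupd2 : Function.update (fam Pu Pd (k+1)) ik1 Pu = fam Pu Pd (k+2) := by
          rw [hik1, fam_update]
        rw [← hPu] at h
        rw [hupd1, hupd2] at h
        rw [hg]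
        simp only []
        linarith [h]
      · intro j hj
        by_cases hjN : j = iN
        · subst hjN
          have hσN : σ iN = ik := by
            rw [hσdef, Equiv.trans_apply, Equiv.swap_apply_right,
              Equiv.swap_apply_of_ne_of_ne hik1ik.symm hikN]
          rw [hσN, hP3, Function.update_self]
          rw [fam_apply, if_pos (by simp only [hik]; omega)]
          exact iff_of_false hPuF hQuF
        · by_cases hjk1 : j = ik1
          · subst hjk1
            have hσk1 : σ ik1 = iN := by
              rw [hσdef, Equiv.trans_apply,
                Equiv.swap_apply_of_ne_of_ne hik1ik hjN, Equiv.swap_apply_left]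
            rw [hσk1, hP3, Function.update_of_ne hjN]
            have hNge : ¬ ((iN : ℕ) < k + 1) := by
              have : (ik1 : ℕ) ≠ (iN : ℕ) := fun h => hjN (Fin.ext h)
              simp only [hik1, hiN] at this ⊢
              omega
            rw [fam_apply, if_neg hNge, fam_apply,
              if_neg (by simp only [hik1]; omega)]
          · have hσj : σ j = j := by
              rw [hσdef, Equiv.trans_apply,
                Equiv.swap_apply_of_ne_of_ne hj hjN,
                Equiv.swap_apply_of_ne_of_ne hjk1 hjN]
            rw [hσj, hP3, Function.update_of_ne hjN]
            have hjvk : (j : ℕ) ≠ k := fun h => hj (Fin.ext h)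
            have hjvk1 : (j : ℕ) ≠ k + 1 := fun h => hjk1 (Fin.ext h)
            simp only [fam_apply]
            by_cases h2 : (j : ℕ) < k
            · rw [if_pos (by omega), if_pos h2]
            · rw [if_neg (by omega), if_neg h2]
    -- (s3)
    have hs3 : v P3 b - v P1 b = g' k := by
      set σ : Equiv.Perm (Fin n) := Equiv.swap ik iN with hσdef
      have hσN : σ iN = ik := by rw [hσdef, Equiv.swap_apply_right]
      have h := iso_anon han hpi hQab (fam Qu Qd k) P1 ik iN
        (by simp [hik]) (by rw [hP1, Function.update_self])
        σ hσN ?_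
      · have hupd1 : Function.update P1 iN Qu = P3 := by
          rw [hP1, hP3, Function.update_idem]
        have hupd2 : Function.update (fam Qu Qd k) ik Qu = fam Qu Qd (k+1) := by
          rw [hik, fam_update]
        rw [← hQu] at h
        rw [hupd1, hupd2] at h
        rw [hg']
        simp only []
        linarith [h]
      · intro j hj
        by_cases hjk : j = ik
        · subst hjk
          have hσk : σ ik = iN := by rw [hσdef, Equiv.swap_apply_left]
          rw [hσk, hP1, Function.update_of_ne hj]
          rw [fam_apply, if_neg (by simp only [hiN]; omega),
            fam_apply, if_neg (by simp only [hik]; omega)]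
          exact iff_of_true hQdT hPdT
        · have hσj : σ j = j := by
            rw [hσdef, Equiv.swap_apply_of_ne_of_ne hjk hj]
          rw [hσj, hP1, Function.update_of_ne hj]
          have hjvk : (j : ℕ) ≠ k := fun h => hjk (Fin.ext h)
          simp only [fam_apply]
          by_cases h2 : (j : ℕ) < k
          · rw [if_pos h2, if_pos h2]
            exact iff_of_false hQuF hPuF
          · rw [if_neg h2, if_neg h2]
            exact iff_of_true hQdT hPdT
    -- (s4)
    have hs4 : v P4 b - v P2 b = g' (k+1) := by
      set σ : Equiv.Perm (Fin n) := Equiv.swap ik1 iN with hσdef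
      have hik1N : ik1 ≠ iN ∨ True := Or.inr trivial
      have hσN : σ iN = ik1 := by rw [hσdef, Equiv.swap_apply_right]
      have h := iso_anon han hpi hQab (fam Qu Qd (k+1)) P2 ik1 iN
        (by simp [hik1]) (by rw [hP2, Function.update_self])
        σ hσN ?_
      · have hupd1 : Function.update P2 iN Qu = P4 := by
          rw [hP2, hP4, Function.update_idem]
        have hupd2 : Function.update (fam Qu Qd (k+1)) ik1 Qu = fam Qu Qd (k+2) := by
          rw [hik1, fam_update]
        rw [← hQu] at h
        rw [hupd1, hupd2] at h
        rw [hg']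
        simp only []
        linarith [h]
      · intro j hj
        by_cases hjk1 : j = ik1
        · subst hjk1
          have hσk : σ ik1 = iN := by rw [hσdef, Equiv.swap_apply_left]
          rw [hσk, hP2, Function.update_of_ne hj]
          rw [fam_apply, if_neg (by simp only [hiN]; omega),
            fam_apply, if_neg (by simp only [hik1]; omega)]
          exact iff_of_true hQdT hPdT
        · have hσj : σ j = j := by
            rw [hσdef, Equiv.swap_apply_of_ne_of_ne hjk1 hj]
          rw [hσj, hP2, Function.update_of_ne hj]
          have hjvk : (j : ℕ) ≠ k + 1 := fun h => hjk1 (Fin.ext h)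
          simp only [fam_apply]
          by_cases h2 : (j : ℕ) < k + 1
          · rw [if_pos h2, if_pos h2]
            exact iff_of_false hQuF hPuF
          · rw [if_neg h2, if_neg h2]
            exact iff_of_true hQdT hPdT
    linarith [hs1, hs2, hs3, hs4]
  -- constancy of g - g'
  have hconst : ∀ k : ℕ, k < n → g k - g' k = g 0 - g' 0 := by
    intro k
    induction k with
    | zero => intro _; rfl
    | succ k ih =>
      intro hk
      rw [hsquare k (by omega)]
      exact ih (by omega)
  -- telescoping
  have htele : ∀ (R S : Pref C) (a0 t : ℕ), a0 + t ≤ n →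
      v (fam (n := n) R S (a0 + t)) b - v (fam R S a0) b
        = ∑ s ∈ Finset.range t, (v (fam (n := n) R S (a0 + s + 1)) b
            - v (fam R S (a0 + s)) b) := by
    intro R S a0 t
    induction t with
    | zero => intro _; simp
    | succ t ih =>
      intro ht
      rw [Finset.sum_range_succ, ← ih (by omega)]
      have : a0 + (t + 1) = (a0 + t) + 1 := by omega
      rw [this]
      ring
  have hL : v (fam (n := n) Pu Pd q) b - v (fam Pu Pd 0) b
      = ∑ s ∈ Finset.range q, g s := by
    have := htele Pu Pd 0 q (by omega)
    simp only [Nat.zero_add] at this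
    exact this
  have hL2 : v (fam (n := n) Pu Pd n) b - v (fam Pu Pd (n - q)) b
      = ∑ s ∈ Finset.range q, g (n - q + s) := by
    have h0 : n - q + q = n := by omega
    have := htele Pu Pd (n - q) q (by omega)
    rw [h0] at this
    exact this
  have hR : v (fam (n := n) Qu Qd q) b - v (fam Qu Qd 0) b
      = ∑ s ∈ Finset.range q, g' s := by
    have := htele Qu Qd 0 q (by omega)
    simp only [Nat.zero_add] at this
    exact this
  have hR2 : v (fam (n := n) Qu Qd n) b - v (fam Qu Qd (n - q)) b
      = ∑ s ∈ Finset.range q, g' (n - q + s) := by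
    have h0 : n - q + q = n := by omega
    have := htele Qu Qd (n - q) q (by omega)
    rw [h0] at this
    exact this
  rw [hL, hL2, hR, hR2, ← Finset.sum_sub_distrib, ← Finset.sum_sub_distrib]
  refine Finset.sum_congr rfl fun s hs => ?_
  have hsq : s < q := Finset.mem_range.1 hs
  have h1 := hconst s (by omega)
  have h2 := hconst (n - q + s) (by omega)
  linarith

end kernel

end TopCountReflection
namespace TopCountReflection

variable {C : Type*} [Fintype C] [DecidableEq C]

lemma swap_val {m : ℕ} (a b j : Fin m) :
    ((Equiv.swap a b) j : ℕ) = if (j : ℕ) = (a : ℕ) then (b : ℕ)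
      else if (j : ℕ) = (b : ℕ) then (a : ℕ) else (j : ℕ) := by
  rw [Equiv.swap_apply_def]
  by_cases h1 : j = a
  · rw [if_pos h1, if_pos (by rw [h1])]
  · rw [if_neg h1, if_neg (show ¬ ((j:ℕ) = (a:ℕ)) from fun h => h1 (Fin.ext h))]
    by_cases h2 : j = b
    · rw [if_pos h2, if_pos (by rw [h2])]
    · rw [if_neg h2, if_neg (show ¬ ((j:ℕ) = (b:ℕ)) from fun h => h2 (Fin.ext h))]

lemma moveToBot_val (e : Pref C) (x c : C) :
    ((moveToBot e x) c : ℕ) = if c = x then 0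
      else if (e c : ℕ) < (e x : ℕ) then (e c : ℕ) + 1 else (e c : ℕ) := by
  show ((Fin.cycleRange (e x) (e c)) : ℕ) = _
  rw [cycleRange_val]
  by_cases hc : c = x
  · subst hc
    rw [if_neg (lt_irrefl _), if_pos rfl, if_pos rfl]
  · have hne : (e c : ℕ) ≠ (e x : ℕ) := fun h => hc (e.injective (Fin.ext h))
    rw [if_neg hc]
    by_cases h2 : (e c : ℕ) < (e x : ℕ)
    · rw [if_pos h2, if_pos h2]
    · rw [if_neg h2, if_neg hne, if_neg h2]

lemma moveToTop_val (e : Pref C) (x c : C) :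
    ((moveToTop e x) c : ℕ) = if c = x then Fintype.card C - 1
      else if (e x : ℕ) < (e c : ℕ) then (e c : ℕ) - 1 else (e c : ℕ) := by
  have hec : (e c : ℕ) < Fintype.card C := (e c).2
  have hex : (e x : ℕ) < Fintype.card C := (e x).2
  show ((Fin.rev (Fin.cycleRange (Fin.rev (e x)) (Fin.rev (e c)))) : ℕ) = _
  rw [Fin.val_rev, cycleRange_val, Fin.val_rev, Fin.val_rev]
  by_cases hc : c = x
  · subst hc
    rw [if_neg (lt_irrefl _), if_pos rfl, if_pos rfl]
  · have hne : (e c : ℕ) ≠ (e x : ℕ) := fun h => hc (e.injective (Fin.ext h))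
    rw [if_neg hc]
    by_cases h2 : (e x : ℕ) < (e c : ℕ)
    · rw [if_pos (by omega), if_pos h2]
      omega
    · rw [if_neg (by omega), if_neg (by omega), if_neg h2]
      omega

section orders

variable (e : Pref C) (x : C)

/-- `x` moved up to rank `r`, other candidates in relative `moveToBot` order. -/
def Mord (r : ℕ) (hr : r < Fintype.card C) : Pref C :=
  (moveToBot e x).trans (Fin.cycleRange ⟨r, hr⟩).symm

lemma Mord_zero (h0 : 0 < Fintype.card C) : Mord e x 0 h0 = moveToBot e x := by
  unfold Mord
  have : Fin.cycleRange (⟨0, h0⟩ : Fin (Fintype.card C)) = 1 := by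
    haveI : NeZero (Fintype.card C) := ⟨by omega⟩
    have h00 : (⟨0, h0⟩ : Fin (Fintype.card C)) = 0 := Fin.ext (by simp)
    rw [h00]; exact Fin.cycleRange_zero _
  rw [this]
  rfl

lemma Mord_x (r : ℕ) (hr : r < Fintype.card C) :
    (Mord e x r hr) x = ⟨r, hr⟩ := by
  unfold Mord
  rw [Equiv.trans_apply, Equiv.symm_apply_eq]
  have h0 : ((moveToBot e x) x : ℕ) = 0 := by rw [moveToBot_val, if_pos rfl]
  apply Fin.ext
  rw [cycleRange_val]
  simp only [Fin.val_mk]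
  rw [h0]
  split_ifs <;> omega

lemma Mord_val_ne (r : ℕ) (hr : r < Fintype.card C) (c : C) (hc : c ≠ x) :
    ((Mord e x r hr) c : ℕ) = if ((moveToBot e x) c : ℕ) ≤ r
      then ((moveToBot e x) c : ℕ) - 1 else ((moveToBot e x) c : ℕ) := by
  set t := (Mord e x r hr) c with ht
  have heq : (moveToBot e x) c = Fin.cycleRange ⟨r, hr⟩ t := by
    rw [ht]; unfold Mord
    rw [Equiv.trans_apply, Equiv.apply_symm_apply]
  have hval : ((moveToBot e x) c : ℕ)
      = if (t : ℕ) < r then (t : ℕ) + 1 else if (t : ℕ) = r then 0 else (t : ℕ) := by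
    rw [heq, cycleRange_val]
  have hB0 : ((moveToBot e x) c : ℕ) ≠ 0 := by
    intro h
    have hx0 : ((moveToBot e x) x : ℕ) = 0 := by rw [moveToBot_val, if_pos rfl]
    exact hc ((moveToBot e x).injective (Fin.ext (by rw [h, hx0])))
  split_ifs at hval ⊢ <;> omega

lemma Mord_step (r : ℕ) (hr : r + 1 < Fintype.card C) :
    Mord e x (r+1) hr = (Mord e x r (by omega)).trans
      (Equiv.swap ⟨r, by omega⟩ ⟨r+1, hr⟩) := by
  have hcyc : (Fin.cycleRange (⟨r+1, hr⟩ : Fin (Fintype.card C)))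
      = (Equiv.swap ⟨r, by omega⟩ ⟨r+1, hr⟩).trans (Fin.cycleRange ⟨r, by omega⟩) := by
    apply Equiv.ext
    intro j
    apply Fin.ext
    rw [Equiv.trans_apply, cycleRange_val, cycleRange_val, swap_val]
    simp only [Fin.val_mk]
    have hj : (j : ℕ) < Fintype.card C := j.2
    split_ifs <;> omega
  unfold Mord
  rw [hcyc]
  apply Equiv.ext
  intro c
  simp only [Equiv.trans_apply, Equiv.symm_trans_apply, Equiv.symm_swap]

end orders

end TopCountReflection
namespace TopCountReflection

variable {C : Type*} [Fintype C] [DecidableEq C]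

section derived

variable (e : Pref C) (x : C) (hm : 3 ≤ Fintype.card C)

/-- the top candidate of `moveToBot e x` -/
def yc : C := (moveToBot e x).symm ⟨Fintype.card C - 1, by omega⟩

/-- `(y, x, minors...)`: `x` raised to second place. -/
def Bst : Pref C := Mord e x (Fintype.card C - 2) (by omega)

/-- `(z, y, x, minors...)`: everything cycled down below the last minor. -/
def Dord : Pref C := (Bst e x hm).trans
  (Fin.cycleRange ⟨Fintype.card C - 1, by omega⟩).symm

/-- the bottom candidate of `Bst`, a "minor" candidate. -/
def zc : C := (Bst e x hm).symm ⟨0, by omega⟩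

lemma yc_val : ((moveToBot e x) (yc e x hm) : ℕ) = Fintype.card C - 1 := by
  unfold yc; rw [Equiv.apply_symm_apply]

lemma mb_x_val : ((moveToBot e x) x : ℕ) = 0 := by rw [moveToBot_val, if_pos rfl]

lemma yc_ne_x : yc e x hm ≠ x := by
  intro h
  have h1 := yc_val e x hm
  rw [h, mb_x_val] at h1
  omega

lemma mb_minor_val {c : C} (hcx : c ≠ x) (hcy : c ≠ yc e x hm) :
    1 ≤ ((moveToBot e x) c : ℕ) ∧ ((moveToBot e x) c : ℕ) ≤ Fintype.card C - 2 := by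
  have h1 : ((moveToBot e x) c : ℕ) ≠ 0 := by
    intro h
    exact hcx ((moveToBot e x).injective (Fin.ext (by rw [h, mb_x_val])))
  have h2 : ((moveToBot e x) c : ℕ) ≠ Fintype.card C - 1 := by
    intro h
    exact hcy ((moveToBot e x).injective (Fin.ext (by rw [h, yc_val])))
  have h3 : ((moveToBot e x) c : ℕ) < Fintype.card C := ((moveToBot e x) c).2
  omega

lemma Bst_x_val : ((Bst e x hm) x : ℕ) = Fintype.card C - 2 := by
  unfold Bst
  rw [Mord_x]

lemma Bst_y_val : ((Bst e x hm) (yc e x hm) : ℕ) = Fintype.card C - 1 := by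
  unfold Bst
  rw [Mord_val_ne e x _ _ _ (yc_ne_x e x hm), yc_val]
  rw [if_neg (by omega)]

lemma Bst_minor_val {c : C} (hcx : c ≠ x) (hcy : c ≠ yc e x hm) :
    ((Bst e x hm) c : ℕ) = ((moveToBot e x) c : ℕ) - 1
      ∧ ((Bst e x hm) c : ℕ) ≤ Fintype.card C - 3 := by
  have hr := mb_minor_val e x hm hcx hcy
  unfold Bst
  rw [Mord_val_ne e x _ _ _ hcx, if_pos (by omega)]
  omega

lemma dirAbove_Bst : DirAbove (Bst e x hm) (yc e x hm) x := by
  unfold DirAbove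
  rw [Bst_x_val, Bst_y_val]
  omega

lemma eta : swapIn (Bst e x hm) (yc e x hm) x = moveToTop e x := by
  apply Equiv.ext
  intro c
  apply Fin.ext
  rw [swapIn_eq_trans, Equiv.trans_apply, swap_val, Bst_y_val, Bst_x_val,
    moveToTop_val]
  by_cases hcx : c = x
  · subst hcx
    rw [if_pos rfl]
    rw [Bst_x_val]
    rw [if_neg (by omega), if_pos rfl]
  · rw [if_neg hcx]
    by_cases hcy : c = yc e x hm
    · subst hcy
      rw [Bst_y_val, if_pos rfl]
      -- need (if ex < ey then ey - 1 else ey) = m - 2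
      have hyv := yc_val e x hm
      rw [moveToBot_val, if_neg (yc_ne_x e x hm)] at hyv
      have hne : (e (yc e x hm) : ℕ) ≠ (e x : ℕ) :=
        fun h => (yc_ne_x e x hm) (e.injective (Fin.ext h))
      have hb1 : (e (yc e x hm) : ℕ) < Fintype.card C := (e _).2
      have hb2 : (e x : ℕ) < Fintype.card C := (e x).2
      split_ifs at hyv ⊢ <;> omega
    · have hmv := Bst_minor_val e x hm hcx hcy
      have hbv := mb_minor_val e x hm hcx hcy
      rw [if_neg (by omega), if_neg (by omega)]
      have hBc : ((moveToBot e x) c : ℕ)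
          = if (e c : ℕ) < (e x : ℕ) then (e c : ℕ) + 1 else (e c : ℕ) := by
        rw [moveToBot_val, if_neg hcx]
      have hne : (e c : ℕ) ≠ (e x : ℕ) := fun h => hcx (e.injective (Fin.ext h))
      split_ifs at hBc ⊢ <;> omega

lemma T_x_val : ((moveToTop e x) x : ℕ) = Fintype.card C - 1 := by
  rw [moveToTop_val, if_pos rfl]

lemma T_y_val : ((moveToTop e x) (yc e x hm) : ℕ) = Fintype.card C - 2 := by
  rw [← eta e x hm, swapIn, Equiv.trans_apply, Equiv.swap_apply_left, Bst_x_val]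

lemma T_minor_val {c : C} (hcx : c ≠ x) (hcy : c ≠ yc e x hm) :
    ((moveToTop e x) c : ℕ) ≤ Fintype.card C - 3 := by
  have hmv := Bst_minor_val e x hm hcx hcy
  rw [← eta e x hm, swapIn, Equiv.trans_apply,
    Equiv.swap_apply_of_ne_of_ne hcy hcx]
  omega

lemma Dord_val (c : C) : ((Dord e x hm) c : ℕ)
    = if ((Bst e x hm) c : ℕ) = 0 then Fintype.card C - 1
      else ((Bst e x hm) c : ℕ) - 1 := by
  set t := (Dord e x hm) c with ht
  have heq : (Bst e x hm) c = Fin.cycleRange ⟨Fintype.card C - 1, by omega⟩ t := by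
    rw [ht]; unfold Dord
    rw [Equiv.trans_apply, Equiv.apply_symm_apply]
  have hval : ((Bst e x hm) c : ℕ)
      = if (t : ℕ) < Fintype.card C - 1 then (t : ℕ) + 1
        else if (t : ℕ) = Fintype.card C - 1 then 0 else (t : ℕ) := by
    rw [heq, cycleRange_val]
  have htb : (t : ℕ) < Fintype.card C := t.2
  split_ifs at hval ⊢ <;> omega

lemma zc_ne_x : zc e x hm ≠ x := by
  intro h
  have : ((Bst e x hm) (zc e x hm) : ℕ) = 0 := by
    unfold zc; rw [Equiv.apply_symm_apply]
  rw [h, Bst_x_val] at this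
  omega

lemma zc_ne_y : zc e x hm ≠ yc e x hm := by
  intro h
  have : ((Bst e x hm) (zc e x hm) : ℕ) = 0 := by
    unfold zc; rw [Equiv.apply_symm_apply]
  rw [h, Bst_y_val] at this
  omega

lemma Bst_z_val : ((Bst e x hm) (zc e x hm) : ℕ) = 0 := by
  unfold zc; rw [Equiv.apply_symm_apply]

lemma Dord_x_val : ((Dord e x hm) x : ℕ) = Fintype.card C - 3 := by
  rw [Dord_val, Bst_x_val, if_neg (by omega)]
  omega

lemma Dord_y_val : ((Dord e x hm) (yc e x hm) : ℕ) = Fintype.card C - 2 := by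
  rw [Dord_val, Bst_y_val, if_neg (by omega)]
  omega

lemma Dord_z_val : ((Dord e x hm) (zc e x hm) : ℕ) = Fintype.card C - 1 := by
  rw [Dord_val, Bst_z_val, if_pos rfl]

lemma dirAbove_Dord : DirAbove (Dord e x hm) (yc e x hm) x := by
  unfold DirAbove
  rw [Dord_x_val, Dord_y_val]
  omega

lemma topC_T [Nonempty C] : topC (moveToTop e x) = x := topC_eq (T_x_val e x)

lemma topC_Bst [Nonempty C] : topC (Bst e x hm) = yc e x hm :=
  topC_eq (Bst_y_val e x hm)

lemma topC_Dord [Nonempty C] : topC (Dord e x hm) = zc e x hm :=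
  topC_eq (Dord_z_val e x hm)

lemma topC_Dord' [Nonempty C] :
    topC (swapIn (Dord e x hm) (yc e x hm) x) = zc e x hm := by
  apply topC_eq
  rw [swapIn, Equiv.trans_apply,
    Equiv.swap_apply_of_ne_of_ne (zc_ne_y e x hm) (zc_ne_x e x hm)]
  exact Dord_z_val e x hm

end derived

end TopCountReflection
namespace TopCountReflection

variable {C : Type*} [Fintype C] [DecidableEq C]

section transfer

variable {n : ℕ} {v : (Fin n → Pref C) → C → ℝ}
variable (e : Pref C) (x : C) (hm : 3 ≤ Fintype.card C)

lemma raise_one (hpr : PairwiseResponsive v)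
    (Pvec : Fin n → Pref C) (i : Fin n) (hPi : Pvec i = moveToBot e x) :
    v (Function.update Pvec i (Bst e x hm)) (yc e x hm) = v Pvec (yc e x hm) := by
  have key : ∀ r : ℕ, ∀ hr : r ≤ Fintype.card C - 2,
      v (Function.update Pvec i (Mord e x r (by omega))) (yc e x hm)
        = v Pvec (yc e x hm) := by
    intro r
    induction r with
    | zero =>
      intro _
      rw [Mord_zero e x (by omega), ← hPi, Function.update_eq_self]
    | succ r ih =>
      intro hr
      have hr1 : r + 1 < Fintype.card C := by omega
      have hr0 : r < Fintype.card C := by omega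
      have hupdi : (Function.update Pvec i (Mord e x r hr0)) i = Mord e x r hr0 :=
        Function.update_self _ _ _
      have hMy : ((Mord e x r hr0) (yc e x hm) : ℕ) = Fintype.card C - 1 := by
        rw [Mord_val_ne e x r hr0 _ (yc_ne_x e x hm), yc_val, if_neg (by omega)]
      have hy1 : yc e x hm ≠ ((Function.update Pvec i (Mord e x r hr0)) i).symm ⟨r, hr0⟩ := by
        rw [hupdi]
        intro h
        have h2 : (Mord e x r hr0) (yc e x hm) = ⟨r, hr0⟩ := by
          rw [h, Equiv.apply_symm_apply]
        have h3 := congrArg Fin.val h2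
        rw [hMy] at h3
        simp only [Fin.val_mk] at h3
        omega
      have hy2 : yc e x hm ≠ ((Function.update Pvec i (Mord e x r hr0)) i).symm ⟨r+1, hr1⟩ := by
        rw [hupdi]
        intro h
        have h2 : (Mord e x r hr0) (yc e x hm) = ⟨r+1, hr1⟩ := by
          rw [h, Equiv.apply_symm_apply]
        have h3 := congrArg Fin.val h2
        rw [hMy] at h3
        simp only [Fin.val_mk] at h3
        omega
      have hstep := step_untouched hpr (Function.update Pvec i (Mord e x r hr0)) i
        ⟨r, hr0⟩ ⟨r+1, hr1⟩ rfl (yc e x hm) hy1 hy2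
      rw [hupdi, Function.update_idem] at hstep
      have hQ : (Mord e x r hr0).trans (Equiv.swap ⟨r+1, hr1⟩ ⟨r, hr0⟩)
          = Mord e x (r+1) hr1 := by
        rw [Mord_step e x r hr1]
        congr 1
        exact Equiv.swap_comm _ _
      rw [hQ] at hstep
      rw [hstep]
      exact ih (by omega)
  exact key (Fintype.card C - 2) le_rfl

lemma transfer (hpr : PairwiseResponsive v) (j : ℕ) :
    v (fam (n := n) (moveToTop e x) (moveToBot e x) j) (yc e x hm)
      = v (fam (n := n) (moveToTop e x) (Bst e x hm) j) (yc e x hm) := by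
  have hmain : ∀ t : ℕ,
      v (fun i : Fin n => if (i : ℕ) < j then moveToTop e x
          else if (i : ℕ) < j + t then Bst e x hm else moveToBot e x) (yc e x hm)
        = v (fam (moveToTop e x) (moveToBot e x) j) (yc e x hm) := by
    intro t
    induction t with
    | zero =>
      congr 1
      funext i
      rw [fam_apply]
      by_cases hij : (i : ℕ) < j
      · rw [if_pos hij, if_pos hij]
      · rw [if_neg hij, if_neg hij, if_neg (by omega)]
    | succ t ih =>
      by_cases hjt : j + t < n
      · have hmixB : (fun i : Fin n => if (i : ℕ) < j then moveToTop e x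
            else if (i : ℕ) < j + t then Bst e x hm else moveToBot e x)
              (⟨j + t, hjt⟩ : Fin n) = moveToBot e x := by
          simp only [Fin.val_mk]
          rw [if_neg (by omega), if_neg (by omega)]
        have hupd : (fun i : Fin n => if (i : ℕ) < j then moveToTop e x
            else if (i : ℕ) < j + (t+1) then Bst e x hm else moveToBot e x)
            = Function.update (fun i : Fin n => if (i : ℕ) < j then moveToTop e x
                else if (i : ℕ) < j + t then Bst e x hm else moveToBot e x)
              (⟨j + t, hjt⟩ : Fin n) (Bst e x hm) := by
          funext i
          rw [Function.update_apply]
          by_cases hi : i = (⟨j + t, hjt⟩ : Fin n)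
          · have hiv : (i : ℕ) = j + t := by rw [hi]
            rw [if_pos hi, if_neg (by omega), if_pos (by omega)]
          · have hiv : (i : ℕ) ≠ j + t := fun h => hi (Fin.ext h)
            rw [if_neg hi]
            by_cases h1 : (i : ℕ) < j
            · rw [if_pos h1, if_pos h1]
            · rw [if_neg h1, if_neg h1]
              by_cases h2 : (i : ℕ) < j + t
              · rw [if_pos (by omega), if_pos h2]
              · rw [if_neg (by omega), if_neg h2]
        rw [hupd, raise_one e x hm hpr _ (⟨j + t, hjt⟩ : Fin n) hmixB]
        exact ih
      · have heq : (fun i : Fin n => if (i : ℕ) < j then moveToTop e x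
            else if (i : ℕ) < j + (t+1) then Bst e x hm else moveToBot e x)
            = (fun i : Fin n => if (i : ℕ) < j then moveToTop e x
                else if (i : ℕ) < j + t then Bst e x hm else moveToBot e x) := by
          funext i
          have hin : (i : ℕ) < n := i.2
          by_cases h1 : (i : ℕ) < j
          · rw [if_pos h1, if_pos h1]
          · rw [if_neg h1, if_neg h1, if_pos (by omega), if_pos (by omega)]
        rw [heq]
        exact ih
  have hfin := hmain n
  have hmixn : (fun i : Fin n => if (i : ℕ) < j then moveToTop e x
      else if (i : ℕ) < j + n then Bst e x hm else moveToBot e x)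
      = fam (moveToTop e x) (Bst e x hm) j := by
    funext i
    rw [fam_apply]
    have hin : (i : ℕ) < n := i.2
    by_cases h1 : (i : ℕ) < j
    · rw [if_pos h1, if_pos h1]
    · rw [if_neg h1, if_neg h1, if_pos (by omega)]
  rw [hmixn] at hfin
  exact hfin.symm

lemma Bst_symm_x : (Bst e x hm).symm ⟨Fintype.card C - 2, by omega⟩ = x := by
  rw [Equiv.symm_apply_eq]
  exact (Fin.ext (Bst_x_val e x hm)).symm

lemma Bst_symm_y : (Bst e x hm).symm ⟨Fintype.card C - 1, by omega⟩ = yc e x hm := by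
  rw [Equiv.symm_apply_eq]
  exact (Fin.ext (Bst_y_val e x hm)).symm

lemma T_eq_Bst_swap : moveToTop e x = (Bst e x hm).trans
    (Equiv.swap ⟨Fintype.card C - 1, by omega⟩ ⟨Fintype.card C - 2, by omega⟩) := by
  rw [← eta e x hm, swapIn_eq_trans,
    show (Bst e x hm) (yc e x hm) = ⟨Fintype.card C - 1, by omega⟩ from
      Fin.ext (Bst_y_val e x hm),
    show (Bst e x hm) x = ⟨Fintype.card C - 2, by omega⟩ from
      Fin.ext (Bst_x_val e x hm)]

/-- Along the Θ-family, minor probabilities are invariant, so the pair sum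
`v x + v y` is constant. -/
lemma theta_pair (hv : IsVotingRule v) (hpr : PairwiseResponsive v) :
    ∀ k, k ≤ n →
      v (fam (n := n) (moveToTop e x) (Bst e x hm) k) x
        + v (fam (moveToTop e x) (Bst e x hm) k) (yc e x hm)
      = v (fam (n := n) (moveToTop e x) (Bst e x hm) 0) x
        + v (fam (moveToTop e x) (Bst e x hm) 0) (yc e x hm) := by
  intro k
  induction k with
  | zero => intro _; rfl
  | succ k ih =>
    intro hk
    have hkn : k < n := by omega
    rw [← ih (by omega)]
    have hBstk : (fam (n := n) (moveToTop e x) (Bst e x hm) k) ⟨k, hkn⟩ = Bst e x hm := by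
      rw [fam_apply, if_neg (by simp only [Fin.val_mk]; omega)]
    apply pair_sum_eq hv _ _ (yc_ne_x e x hm).symm
    intro c hcx hcy
    have hc1 : c ≠ ((fam (n := n) (moveToTop e x) (Bst e x hm) k) ⟨k, hkn⟩).symm
        ⟨Fintype.card C - 2, by omega⟩ := by
      rw [hBstk, Bst_symm_x]
      exact hcx
    have hc2 : c ≠ ((fam (n := n) (moveToTop e x) (Bst e x hm) k) ⟨k, hkn⟩).symm
        ⟨Fintype.card C - 1, by omega⟩ := by
      rw [hBstk, Bst_symm_y]
      exact hcy
    have hstep := step_untouched hpr (fam (moveToTop e x) (Bst e x hm) k) ⟨k, hkn⟩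
      ⟨Fintype.card C - 2, by omega⟩ ⟨Fintype.card C - 1, by omega⟩
      (by simp only [Fin.val_mk]; omega) c hc1 hc2
    have htrans : ((fam (n := n) (moveToTop e x) (Bst e x hm) k) ⟨k, hkn⟩).trans
        (Equiv.swap ⟨Fintype.card C - 1, by omega⟩ ⟨Fintype.card C - 2, by omega⟩)
        = moveToTop e x := by
      rw [hBstk, ← T_eq_Bst_swap]
    rw [htrans] at hstep
    have hfe : fam (n := n) (moveToTop e x) (Bst e x hm) (k+1)
        = Function.update (fam (moveToTop e x) (Bst e x hm) k) ⟨k, hkn⟩ (moveToTop e x) :=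
      (fam_update _ _ k hkn).symm
    rw [hfe]
    exact hstep

end transfer

end TopCountReflection
namespace TopCountReflection

variable {C : Type*} [Fintype C] [DecidableEq C]

lemma concentration {n : ℕ} {v : (Fin n → Pref C) → C → ℝ} (hv : IsVotingRule v)
    (W : Fin n → Pref C) {x y : C} (hyx : y ≠ x) {ε : ℝ}
    (hminor : ∀ c, c ≠ x → c ≠ y → v W c ≤ ε) :
    0 ≤ 1 - v W x - v W y ∧
      1 - v W x - v W y ≤ ((Fintype.card C - 2 : ℕ) : ℝ) * ε := by
  have hymem : y ∈ Finset.univ.erase x := Finset.mem_erase.2 ⟨hyx, Finset.mem_univ y⟩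
  have hsplit : (1 : ℝ) = v W x + (v W y + ∑ c ∈ (Finset.univ.erase x).erase y, v W c) := by
    rw [← hv.2 W, ← Finset.add_sum_erase _ _ (Finset.mem_univ x),
      ← Finset.add_sum_erase _ _ hymem]
  have hcard : ((Finset.univ.erase x).erase y).card = Fintype.card C - 2 := by
    rw [Finset.card_erase_of_mem hymem, Finset.card_erase_of_mem (Finset.mem_univ x),
      Finset.card_univ]
    omega
  constructor
  · have h0 : (0:ℝ) ≤ ∑ c ∈ (Finset.univ.erase x).erase y, v W c :=
      Finset.sum_nonneg fun c _ => hv.1 W c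
    linarith
  · have hle : ∑ c ∈ (Finset.univ.erase x).erase y, v W c
        ≤ ((Finset.univ.erase x).erase y).card • ε :=
      Finset.sum_le_card_nsmul _ _ _ (fun c hc => by
        simp only [Finset.mem_erase] at hc
        exact hminor c hc.2.1 hc.1)
    rw [hcard, nsmul_eq_mul] at hle
    linarith

end TopCountReflection
/-- Reflection identity for the top-count function:
`|v'(x, n−q) − (1 − v'(x, q))| ≤ 66mε`. -/
theorem top_count_reflection [Fintype C] [Nonempty C] [DecidableEq C] {n : ℕ}
    (hm : 3 ≤ Fintype.card C) (hn : 1 ≤ n) (v : (Fin n → Pref C) → C → ℝ)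
    (hv : IsVotingRule v) (han : Anonymous v) (hpr : PairwiseResponsive v)
    (hpi : PairwiseIsolated v) (ε : ℝ) (hsu : StrongUnanimity ε v)
    (e : Pref C) (x : C) (q : ℕ) (hq : q ≤ n) :
    |vTopCount v e x (n - q) - (1 - vTopCount v e x q)| ≤
      66 * (Fintype.card C : ℝ) * ε := by
  classical
  open TopCountReflection in
  -- notation
  have hyx : yc e x hm ≠ x := yc_ne_x e x hm
  -- ε is nonnegative
  have hTall : 1 - ε ≤ v (fun _ : Fin n => moveToTop e x) x :=
    hsu x _ (fun i => topC_T e x)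
  have hT1 : v (fun _ : Fin n => moveToTop e x) x ≤ 1 :=
    prob_le_one hv _ x
  have heps : 0 ≤ ε := by linarith
  -- the kernel identity
  have hker := kernel han hpi (yc e x hm) x (Bst e x hm) (Dord e x hm)
    (dirAbove_Bst e x hm) (dirAbove_Dord e x hm) q hq
  rw [eta e x hm] at hker
  -- Λ-family bounds
  have hLam : ∀ k : ℕ,
      0 ≤ v (fam (n := n) (swapIn (Dord e x hm) (yc e x hm) x) (Dord e x hm) k) x ∧
      v (fam (n := n) (swapIn (Dord e x hm) (yc e x hm) x) (Dord e x hm) k) x ≤ ε := by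
    intro k
    have htop : ∀ i : Fin n,
        topC ((fam (swapIn (Dord e x hm) (yc e x hm) x) (Dord e x hm) k) i)
          = zc e x hm := by
      intro i
      rw [fam_apply]
      split_ifs
      · exact topC_Dord' e x hm
      · exact topC_Dord e x hm
    have hz := hsu (zc e x hm) _ htop
    have hp := prob_pair_le_one hv
      (fam (swapIn (Dord e x hm) (yc e x hm) x) (Dord e x hm) k)
      (show x ≠ zc e x hm from (zc_ne_x e x hm).symm)
    exact ⟨hv.1 _ _, by linarith⟩
  -- Θ-family pair sums
  have hpairq := theta_pair e x hm hv hpr q hq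
  have hpairnq := theta_pair e x hm hv hpr (n - q) (by omega)
  have hpairn := theta_pair e x hm hv hpr n le_rfl
  -- transfer of y-probabilities
  have htrq := transfer e x hm hpr (n := n) (v := v) q
  have htrnq := transfer e x hm hpr (n := n) (v := v) (n - q)
  -- minor candidates in the canonical profiles
  have hminor : ∀ (j : ℕ) (c : C), c ≠ x → c ≠ yc e x hm →
      v (fam (n := n) (moveToTop e x) (moveToBot e x) j) c ≤ ε := by
    intro j c hcx hcy
    refine pareto hv hpr hsu (yc e x hm) c hcy _
      (fam (moveToTop e x) (moveToBot e x) j) le_rfl ?_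
    intro i
    rw [fam_apply]
    split_ifs
    · show ((moveToTop e x) c) < ((moveToTop e x) (yc e x hm))
      have h1 := T_minor_val e x hm hcx hcy
      have h2 := T_y_val e x hm
      exact Fin.lt_def.2 (by omega)
    · show ((moveToBot e x) c) < ((moveToBot e x) (yc e x hm))
      have h1 := (mb_minor_val e x hm hcx hcy).2
      have h2 := yc_val e x hm
      exact Fin.lt_def.2 (by omega)
  have hconcq := concentration hv (fam (n := n) (moveToTop e x) (moveToBot e x) q)
    hyx (hminor q)
  have hconcnq := concentration hv
    (fam (n := n) (moveToTop e x) (moveToBot e x) (n - q)) hyx (hminor (n - q))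
  -- endpoint unanimity for the Θ-family
  have hfam0 : fam (n := n) (moveToTop e x) (Bst e x hm) 0 = fun _ => Bst e x hm :=
    funext fun i => if_neg (Nat.not_lt_zero _)
  have hfamn : fam (n := n) (moveToTop e x) (Bst e x hm) n = fun _ => moveToTop e x :=
    funext fun i => if_pos i.2
  have hB0 : 1 - ε ≤ v (fam (n := n) (moveToTop e x) (Bst e x hm) 0) (yc e x hm) := by
    rw [hfam0]
    exact hsu (yc e x hm) _ (fun i => topC_Bst e x hm)
  have hBn : v (fam (n := n) (moveToTop e x) (Bst e x hm) n) (yc e x hm) ≤ ε := by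
    rw [hfamn]
    have hp := prob_pair_le_one hv (fun _ : Fin n => moveToTop e x) hyx
    linarith
  have hBn0 : 0 ≤ v (fam (n := n) (moveToTop e x) (Bst e x hm) n) (yc e x hm) :=
    hv.1 _ _
  have hB01 : v (fam (n := n) (moveToTop e x) (Bst e x hm) 0) (yc e x hm) ≤ 1 :=
    prob_le_one hv _ _
  -- cast facts
  have hc2m : ((Fintype.card C - 2 : ℕ) : ℝ) ≤ (Fintype.card C : ℝ) :=
    Nat.cast_le.2 (Nat.sub_le _ _)
  have hm3' : (3 : ℝ) ≤ (Fintype.card C : ℝ) := by exact_mod_cast hm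
  have hc2me : ((Fintype.card C - 2 : ℕ) : ℝ) * ε ≤ (Fintype.card C : ℝ) * ε :=
    mul_le_mul_of_nonneg_right hc2m heps
  have h3me : 3 * ε ≤ (Fintype.card C : ℝ) * ε :=
    mul_le_mul_of_nonneg_right hm3' heps
  have hme0 : 0 ≤ (Fintype.card C : ℝ) * ε := mul_nonneg (Nat.cast_nonneg _) heps
  -- unfold the goal
  show |v (fam (n := n) (moveToTop e x) (moveToBot e x) (n - q)) x
    - (1 - v (fam (n := n) (moveToTop e x) (moveToBot e x) q) x)|
      ≤ 66 * (Fintype.card C : ℝ) * ε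
  obtain ⟨hL0q, hLεq⟩ := hLam q
  obtain ⟨hL00, hLε0⟩ := hLam 0
  obtain ⟨hL0n, hLεn⟩ := hLam n
  obtain ⟨hL0nq, hLεnq⟩ := hLam (n - q)
  obtain ⟨hcq1, hcq2⟩ := hconcq
  obtain ⟨hcnq1, hcnq2⟩ := hconcnq
  apply abs_le.mpr
  constructor
  · linarith
  · linarith
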